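/- There exist positive constants C₂, C₃, C₄ such that for all real numbers a, b, c: −a · ((a+b+c)³ − b³) ≤ −C₂ a⁴ + C₃ c⁴ + C₄ c² b². -/
import Mathlib


/-- There exist positive constants C₂, C₃, C₄ such that for all real numbers a, b, c:
−a · ((a+b+c)³ − b³) ≤ −C₂ a⁴ + C₃ c⁴ + C₄ c² b². -/
theorem stmt_10 :
    ∃ C₂ C₃ C₄ : ℝ, 0 < C₂ ∧ 0 < C₃ ∧ 0 < C₄ ∧ ∀ a b c : ℝ,
      -a * ((a + b + c) ^ 3 - b ^ 3) ≤ -C₂ * a ^ 4 + C₃ * c ^ 4 + C₄ * c ^ 2 * b ^ 2 := by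
  refine ⟨1/128, 10, 3, by norm_num, by norm_num, by norm_num, fun a b c => ?_⟩
  set Q : ℝ := (a + b + c) ^ 2 + (a + b + c) * b + b ^ 2 with hQdef
  have hQ : 0 ≤ Q := by nlinarith [sq_nonneg (a + b + c + b), sq_nonneg (a + b + c), sq_nonneg b]
  have h1 : (1/2) * ((a+c)^2 - c^2) * Q ≤ a * ((a+b+c)^3 - b^3) := by
    nlinarith [mul_nonneg hQ (sq_nonneg a)]
  have h2 : (a+c)^4 / 4 ≤ (a+c)^2 * Q := by
    nlinarith [sq_nonneg ((a+c) * (a + 2*b + c))]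
  have h3 : c^2 * Q ≤ 3 * c^2 * (a+c)^2 + (9/2) * c^2 * b^2 := by
    nlinarith [sq_nonneg (c * (4*a + 4*c - 3*b)), sq_nonneg (c * b)]
  have h4 : (3/2) * c^2 * (a+c)^2 ≤ (1/16) * (a+c)^4 + 9 * c^4 := by
    nlinarith [sq_nonneg ((a+c)^2 - 12 * c^2)]
  have ha : a^2 ≤ 2*(a+c)^2 + 2*c^2 := by nlinarith [sq_nonneg (a + 2*c)]
  have h5 : a^4 ≤ 8*(a+c)^4 + 8*c^4 := by
    nlinarith [ha, sq_nonneg ((a+c)^2 - c^2), sq_nonneg a, sq_nonneg (a+c), sq_nonneg c,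
      mul_self_nonneg (2*(a+c)^2 + 2*c^2 - a^2)]
  nlinarith [h1, h2, h3, h4, h5]
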